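/- Let q be a prime power, k ≥ 3, s ≥ 0, and let K be an (n, k+s-1)-multi-arc in PG(k-1,q) with n > s(q+1) + k - 1. Then every (k-3)-flat of PG(k-1,q) contains at most k-2 points of K (counted with multiplicity); in particular (taking the case of (k-3)-flats spanned by fewer points), every point of K has multiplicity 1, i.e., K is a set. -/
import Mathlib


open scoped Classical

noncomputable section

/-- The number of points of the multiset `K` of projective points lying in the
submodule (flat) `W`, counted with multiplicity. -/
def mPointsOn {F V : Type*} [Field F] [AddCommGroup V] [Module F V]
    (K : Multiset (Projectivization F V)) (W : Submodule F V) : ℕ :=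
  Multiset.card (K.filter (fun P => P.submodule ≤ W))

/-- The number of points of the finite set `K` of projective points lying in the
submodule (flat) `W`. -/
def pointsOn {F V : Type*} [Field F] [AddCommGroup V] [Module F V]
    (K : Finset (Projectivization F V)) (W : Submodule F V) : ℕ :=
  (K.filter (fun P => P.submodule ≤ W)).card

/-- `W` is a hyperplane of the projective space `PG(V)`, i.e. a linear subspace of
codimension one (projective codimension one flat). -/
def IsHyp (F : Type*) [Field F] {V : Type*} [AddCommGroup V] [Module F V]
    (W : Submodule F V) : Prop :=
  Module.finrank F W = Module.finrank F V - 1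

/-- An `(n, r)`-multi-arc: a multiset of `n > r` projective points such that every
hyperplane contains at most `r` of them (with multiplicity) and some hyperplane
contains exactly `r` of them. -/
def IsMultiArc {F V : Type*} [Field F] [AddCommGroup V] [Module F V]
    (n r : ℕ) (K : Multiset (Projectivization F V)) : Prop :=
  Multiset.card K = n ∧ r < n ∧
    (∀ W : Submodule F V, IsHyp F W → mPointsOn K W ≤ r) ∧
    (∃ W : Submodule F V, IsHyp F W ∧ mPointsOn K W = r)

/-- An `(n, r)`-arc: a set of `n > r` projective points such that every hyperplane
contains at most `r` of them and some hyperplane contains exactly `r` of them. -/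
def IsArc {F V : Type*} [Field F] [AddCommGroup V] [Module F V]
    (n r : ℕ) (K : Finset (Projectivization F V)) : Prop :=
  K.card = n ∧ r < n ∧
    (∀ W : Submodule F V, IsHyp F W → pointsOn K W ≤ r) ∧
    (∃ W : Submodule F V, IsHyp F W ∧ pointsOn K W = r)

/-- A complete `(n, r)`-arc: one admitting no extension to an `(n+1, r)`-arc. -/
def IsCompleteArc {F V : Type*} [Field F] [AddCommGroup V] [Module F V]
    (n r : ℕ) (K : Finset (Projectivization F V)) : Prop :=
  IsArc n r K ∧ ∀ P ∉ K, ¬ IsArc (n + 1) r (insert P K)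

/-- A hyperplane is a secant of the arc `K` (relative to the parameter `r`) if it
contains exactly `r` points of `K`. -/
def IsSecant {F V : Type*} [Field F] [AddCommGroup V] [Module F V]
    (K : Finset (Projectivization F V)) (r : ℕ) (W : Submodule F V) : Prop :=
  IsHyp F W ∧ pointsOn K W = r

/-- A hyperplane is a tangent of the arc `K` (relative to the parameter `r`) if it
contains a positive number, fewer than `r`, of points of `K`. -/
def IsTangent {F V : Type*} [Field F] [AddCommGroup V] [Module F V]
    (K : Finset (Projectivization F V)) (r : ℕ) (W : Submodule F V) : Prop :=
  IsHyp F W ∧ 0 < pointsOn K W ∧ pointsOn K W < r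

/-- `m^s(k,q)`: the maximum size of a complete `(n, k+s-1)`-arc in `PG(k-1,q)`,
where the projective space is coordinatized over the field `F` of order `q`. -/
def mPow (F : Type*) [Field F] (k s : ℕ) : ℕ :=
  sSup {n | ∃ K : Finset (Projectivization F (Fin k → F)), IsCompleteArc n (k + s - 1) K}


section Aux

variable {F V : Type*} [Field F] [AddCommGroup V] [Module F V]

lemma mPointsOn_cons (K : Multiset (Projectivization F V)) (a : Projectivization F V)
    (W : Submodule F V) :
    mPointsOn (a ::ₘ K) W = (if a.submodule ≤ W then 1 else 0) + mPointsOn K W := by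
  simp [mPointsOn, Multiset.filter_cons, apply_ite Multiset.card]

lemma sum_mPointsOn (K : Multiset (Projectivization F V)) (W : Submodule F V)
    (S : Finset (Submodule F V)) (h3 : ∀ U ∈ S, W ≤ U)
    (h2 : ∀ P : Projectivization F V, ¬ P.submodule ≤ W →
      (S.filter (fun U => P.submodule ≤ U)).card = 1) :
    (∑ U ∈ S, mPointsOn K U) + mPointsOn K W
      = S.card * mPointsOn K W + Multiset.card K := by
  induction K using Multiset.induction_on with
  | empty => simp [mPointsOn]
  | cons a K ih =>
    simp only [mPointsOn_cons, Multiset.card_cons, Finset.sum_add_distrib]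
    have key : (∑ U ∈ S, if a.submodule ≤ U then 1 else 0) + (if a.submodule ≤ W then 1 else 0)
        = S.card * (if a.submodule ≤ W then 1 else 0) + 1 := by
      by_cases h : a.submodule ≤ W
      · simp only [h, if_true]
        rw [Finset.sum_congr rfl (fun U hU => if_pos (h.trans (h3 U hU)))]
        simp [mul_comm]
      · simp only [h, if_false]
        rw [← Finset.card_filter]
        simp [h2 a h]
    have hmul : S.card * ((if a.submodule ≤ W then 1 else 0) + mPointsOn K W)
        = S.card * (if a.submodule ≤ W then 1 else 0) + S.card * mPointsOn K W :=
      Nat.mul_add _ _ _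
    omega

lemma key_ineq (K : Multiset (Projectivization F V)) (W : Submodule F V)
    (S : Finset (Submodule F V)) (b : ℕ) (h3 : ∀ U ∈ S, W ≤ U)
    (h2 : ∀ P : Projectivization F V, ¬ P.submodule ≤ W →
      (S.filter (fun U => P.submodule ≤ U)).card = 1)
    (h1 : ∀ U ∈ S, mPointsOn K U ≤ b) :
    Multiset.card K + S.card * mPointsOn K W ≤ S.card * b + mPointsOn K W := by
  have hid := sum_mPointsOn K W S h3 h2
  have hsum : (∑ U ∈ S, mPointsOn K U) ≤ S.card * b := by
    calc (∑ U ∈ S, mPointsOn K U) ≤ ∑ U ∈ S, b := Finset.sum_le_sum h1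
    _ = S.card * b := by rw [Finset.sum_const, smul_eq_mul]
  omega

variable [FiniteDimensional F V]

lemma finrank_sup_point (W : Submodule F V) (P : Projectivization F V)
    (h : ¬ P.submodule ≤ W) :
    Module.finrank F ↥(W ⊔ P.submodule) = Module.finrank F W + 1 := by
  have h1 := Submodule.finrank_sup_add_finrank_inf_eq W P.submodule
  have hP : Module.finrank F ↥P.submodule = 1 := P.finrank_submodule
  have hinf : W ⊓ P.submodule = ⊥ := by
    by_contra hne
    have h0 : Module.finrank F ↥(W ⊓ P.submodule) ≠ 0 := by
      intro h0'
      exact hne (Submodule.finrank_eq_zero.mp h0')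
    have hge : Module.finrank F ↥P.submodule ≤ Module.finrank F ↥(W ⊓ P.submodule) := by
      omega
    have := Submodule.eq_of_le_of_finrank_le (inf_le_right : W ⊓ P.submodule ≤ P.submodule) hge
    exact h (this ▸ (inf_le_left : W ⊓ P.submodule ≤ W))
  rw [hinf, hP] at h1
  simpa using h1

lemma exists_flat_succ (W : Submodule F V)
    (hd : Module.finrank F W < Module.finrank F V) :
    ∃ U : Submodule F V, W ≤ U ∧ Module.finrank F U = Module.finrank F W + 1 := by
  obtain ⟨v, hv⟩ := W.exists_of_finrank_lt hd
  have hv0 : v ≠ 0 := by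
    intro h; exact hv 1 one_ne_zero (by simp [h])
  set P := Projectivization.mk F v hv0 with hP
  have hPW : ¬ P.submodule ≤ W := by
    rw [hP, Projectivization.submodule_mk, Submodule.span_singleton_le_iff_mem]
    intro hmem
    exact hv 1 one_ne_zero (by simpa using hmem)
  exact ⟨W ⊔ P.submodule, le_sup_left, finrank_sup_point W P hPW⟩

end Aux

lemma card_flats_through {F V : Type*} [Field F] [Fintype F] [AddCommGroup V] [Module F V]
    [Fintype V] (W : Submodule F V)
    (hW : Module.finrank F W + 2 = Module.finrank F V)
    (S : Finset (Submodule F V))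
    (hS : ∀ U ∈ S, W ≤ U ∧ Module.finrank F U + 1 = Module.finrank F V) :
    S.card ≤ Fintype.card F + 1 := by
  classical
  set q := Fintype.card F with hq
  set d := Module.finrank F W with hd
  have hq2 : 2 ≤ q := Fintype.one_lt_card
  -- the finsets of points of U outside W, for U ∈ S
  set t : Submodule F V → Finset V := fun U => Finset.univ.filter (fun x => x ∈ U ∧ x ∉ W)
    with ht
  have hcardU : ∀ U : Submodule F V, (Finset.univ.filter (fun x => x ∈ U)).card
      = q ^ (Module.finrank F U) := by
    intro U
    rw [← Fintype.card_subtype]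
    exact Module.card_eq_pow_finrank
  have hsub : ∀ U ∈ S, (Finset.univ.filter (fun x => x ∈ W))
      ⊆ (Finset.univ.filter (fun x => x ∈ U)) := by
    intro U hU x hx
    simp only [Finset.mem_filter, Finset.mem_univ, true_and] at hx ⊢
    exact (hS U hU).1 hx
  have htcard : ∀ U ∈ S, (t U).card = q ^ (d + 1) - q ^ d := by
    intro U hU
    have : t U = (Finset.univ.filter (fun x => x ∈ U)) \ (Finset.univ.filter (fun x => x ∈ W)) := by
      ext x; simp [ht]
    rw [this, Finset.card_sdiff_of_subset (hsub U hU), hcardU, hcardU]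
    have : Module.finrank F U = d + 1 := by have := (hS U hU).2; omega
    rw [this]
  -- pairwise disjoint
  have hdisj : (S : Set (Submodule F V)).PairwiseDisjoint t := by
    intro U1 h1 U2 h2 hne
    simp only [Finset.disjoint_left, ht, Finset.mem_filter, Finset.mem_univ, true_and]
    rintro x ⟨hxU1, hxW⟩ ⟨hxU2, _⟩
    -- show U1 ⊓ U2 = W
    have hle1 : W ≤ U1 := (hS U1 h1).1
    have hle2 : W ≤ U2 := (hS U2 h2).1
    have hr1 : Module.finrank F U1 = d + 1 := by have := (hS U1 h1).2; omega
    have hr2 : Module.finrank F U2 = d + 1 := by have := (hS U2 h2).2; omega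
    have hnle : ¬ U2 ≤ U1 := by
      intro hle
      exact hne (Submodule.eq_of_le_of_finrank_le hle (by omega)).symm
    have hsuplt : U1 < U1 ⊔ U2 := by
      rcases lt_or_eq_of_le (le_sup_left : U1 ≤ U1 ⊔ U2) with h | h
      · exact h
      · exact absurd (h ▸ le_sup_right : U2 ≤ U1) hnle
    have hsup : Module.finrank F ↥(U1 ⊔ U2) = d + 2 := by
      have hlt := Submodule.finrank_lt_finrank_of_lt hsuplt
      have hle := Submodule.finrank_le (U1 ⊔ U2)
      omega
    have hinf : Module.finrank F ↥(U1 ⊓ U2) = d := by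
      have := Submodule.finrank_sup_add_finrank_inf_eq U1 U2
      omega
    have hWinf : W = U1 ⊓ U2 :=
      Submodule.eq_of_le_of_finrank_le (le_inf hle1 hle2) (by omega)
    exact hxW (hWinf ▸ (Submodule.mem_inf.2 ⟨hxU1, hxU2⟩))
  have hbu : (S.biUnion t).card = S.card * (q ^ (d + 1) - q ^ d) := by
    rw [Finset.card_biUnion hdisj]
    rw [Finset.sum_congr rfl htcard, Finset.sum_const, smul_eq_mul]
  have hbusub : S.biUnion t ⊆ Finset.univ \ (Finset.univ.filter (fun x => x ∈ W)) := by
    intro x hx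
    rw [Finset.mem_biUnion] at hx
    obtain ⟨U, _, hxU⟩ := hx
    simp only [ht, Finset.mem_filter, Finset.mem_univ, true_and] at hxU
    simp [hxU.2]
  have hcardV : (Finset.univ : Finset V).card = q ^ (d + 2) := by
    rw [Finset.card_univ, Module.card_eq_pow_finrank (K := F) (V := V), hW]
  have hWcard : (Finset.univ.filter (fun x => x ∈ W)).card = q ^ d := by
    rw [hcardU]
  have hfinal : S.card * (q ^ (d + 1) - q ^ d) ≤ q ^ (d + 2) - q ^ d := by
    rw [← hbu]
    calc (S.biUnion t).card ≤ (Finset.univ \ (Finset.univ.filter (fun x => x ∈ W))).card :=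
          Finset.card_le_card hbusub
      _ = q ^ (d + 2) - q ^ d := by
          rw [Finset.card_sdiff_of_subset (Finset.filter_subset _ _), hcardV, hWcard]
  -- now arithmetic
  set Q := q ^ d with hQdef
  have hQpos : 0 < Q := Nat.one_le_pow _ _ (by omega)
  have e1 : q ^ (d + 1) = Q * q := pow_succ q d
  have e2 : q ^ (d + 2) = Q * q * q := by rw [hQdef, pow_succ, pow_succ]
  rw [e1, e2] at hfinal
  have hQle : Q ≤ Q * q := Nat.le_mul_of_pos_right Q (by omega)
  have hQle2 : Q ≤ Q * q * q := le_trans hQle (Nat.le_mul_of_pos_right _ (by omega))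
  set a := Q * q - Q with hadef
  have ha : a + Q = Q * q := Nat.sub_add_cancel hQle
  have h7 : Q * q * q = a * q + a + Q := by
    calc Q * q * q = (a + Q) * q := by rw [ha]
    _ = a * q + Q * q := by ring
    _ = a * q + (a + Q) := by rw [ha]
    _ = a * q + a + Q := by ring
  have h8 : Q * q * q - Q = a * q + a := by omega
  rw [h8] at hfinal
  have hapos : 1 ≤ a := by
    have : Q * 2 ≤ Q * q := Nat.mul_le_mul_left Q hq2
    omega
  by_contra hcon
  push_neg at hcon
  have hN : q + 2 ≤ S.card := hcon
  have h9 : (q + 2) * a ≤ S.card * a := Nat.mul_le_mul_right a hN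
  have h10 : (q + 2) * a = a * q + 2 * a := by ring
  omega


/-- If an `(n, k+s-1)`-multi-arc `K` in `PG(k-1,q)` has `n > s(q+1) + k - 1`, then
every `(k-3)`-flat (submodule of linear dimension `k-2`) contains at most `k-2`
points of `K` (with multiplicity); in particular every point of `K` has multiplicity
one, i.e. `K` is a set. -/
theorem stmt6 {F : Type*} [Field F] [Fintype F] {q k s n : ℕ}
    (hq : Fintype.card F = q) (hk : 3 ≤ k)
    (K : Multiset (Projectivization F (Fin k → F)))
    (hK : IsMultiArc n (k + s - 1) K)
    (hn : s * (q + 1) + k - 1 < n) :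
    (∀ W : Submodule F (Fin k → F), Module.finrank F W = k - 2 →
      mPointsOn K W ≤ k - 2) ∧
    K.Nodup := by
  classical
  obtain ⟨hcard, hrn, hbound, -⟩ := hK
  have hV : Module.finrank F (Fin k → F) = k := Module.finrank_fin_fun F
  haveI : Finite (Submodule F (Fin k → F)) :=
    Finite.of_injective _ (SetLike.coe_injective (A := Submodule F (Fin k → F)))
  haveI : Fintype (Submodule F (Fin k → F)) := Fintype.ofFinite _
  have hq2 : 2 ≤ q := hq ▸ Fintype.one_lt_card
  have hn' : s * (q + 1) + k ≤ n := by omega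
  have part1 : ∀ W : Submodule F (Fin k → F), Module.finrank F W = k - 2 →
      mPointsOn K W ≤ k - 2 := by
    intro W hW
    set S : Finset (Submodule F (Fin k → F)) :=
      Finset.univ.filter (fun U => W ≤ U ∧ Module.finrank F U = k - 1) with hSdef
    have hmemS : ∀ U, U ∈ S ↔ W ≤ U ∧ Module.finrank F U = k - 1 := by
      intro U; simp [hSdef]
    have h3 : ∀ U ∈ S, W ≤ U := fun U hU => ((hmemS U).1 hU).1
    have h2 : ∀ P : Projectivization F (Fin k → F), ¬ P.submodule ≤ W →
        (S.filter (fun U => P.submodule ≤ U)).card = 1 := by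
      intro P hP
      have hsupr : Module.finrank F ↥(W ⊔ P.submodule) = k - 1 := by
        rw [finrank_sup_point W P hP, hW]; omega
      have heq : S.filter (fun U => P.submodule ≤ U) = {W ⊔ P.submodule} := by
        ext U
        simp only [Finset.mem_filter, hmemS, Finset.mem_singleton]
        constructor
        · rintro ⟨⟨hWU, hrU⟩, hPU⟩
          exact (Submodule.eq_of_le_of_finrank_le (sup_le hWU hPU) (by omega)).symm
        · rintro rfl
          exact ⟨⟨le_sup_left, hsupr⟩, le_sup_right⟩
      rw [heq, Finset.card_singleton]
    have h1 : ∀ U ∈ S, mPointsOn K U ≤ k + s - 1 := by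
      intro U hU
      exact hbound U (by rw [IsHyp, hV]; exact ((hmemS U).1 hU).2)
    have hne : S.Nonempty := by
      obtain ⟨U, hWU, hU⟩ := exists_flat_succ W (by rw [hW, hV]; omega)
      exact ⟨U, (hmemS U).2 ⟨hWU, by rw [hU, hW]; omega⟩⟩
    have hNle : S.card ≤ q + 1 := by
      have := card_flats_through W (by rw [hW, hV]; omega) S
        (fun U hU => ⟨((hmemS U).1 hU).1, by rw [((hmemS U).1 hU).2, hV]; omega⟩)
      omega
    have hineq := key_ineq K W S (k + s - 1) h3 h2 h1
    rw [hcard] at hineq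
    set N := S.card with hNdef
    set m := mPointsOn K W with hmdef
    have hN1 : 1 ≤ N := Finset.card_pos.mpr hne
    by_contra hcon
    push_neg at hcon
    have hm : k - 1 ≤ m := by omega
    have e : k + s - 1 = (k - 1) + s := by omega
    rw [e] at hineq
    have t1 : N * ((k - 1) + s) = N * (k - 1) + N * s := Nat.mul_add _ _ _
    have t2 : N * s ≤ (q + 1) * s := Nat.mul_le_mul_right s hNle
    have t3 : (N - 1) * (k - 1) ≤ (N - 1) * m := Nat.mul_le_mul_left _ hm
    have e1 : (N - 1) * m + m = N * m := by
      have h' : N - 1 + 1 = N := by omega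
      calc (N - 1) * m + m = ((N - 1) + 1) * m := by ring
      _ = N * m := by rw [h']
    have e2 : (N - 1) * (k - 1) + (k - 1) = N * (k - 1) := by
      have h' : N - 1 + 1 = N := by omega
      calc (N - 1) * (k - 1) + (k - 1) = ((N - 1) + 1) * (k - 1) := by ring
      _ = N * (k - 1) := by rw [h']
    have t4 : (q + 1) * s = s * (q + 1) := mul_comm _ _
    omega
  refine ⟨part1, ?_⟩
  have descent : ∀ d : ℕ, d ≤ k - 3 → ∀ W : Submodule F (Fin k → F),
      Module.finrank F W = k - 2 - d → mPointsOn K W ≤ k - 2 - d := by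
    intro d
    induction d with
    | zero => intro _ W hW; exact part1 W (by simpa using hW)
    | succ d ih =>
      intro hd W hW
      set j := k - 2 - (d + 1) with hjdef
      have hjk : j + 1 = k - 2 - d := by omega
      have hWj : Module.finrank F W = j := hW
      set S : Finset (Submodule F (Fin k → F)) :=
        Finset.univ.filter (fun U => W ≤ U ∧ Module.finrank F U = j + 1) with hSdef
      have hmemS : ∀ U, U ∈ S ↔ W ≤ U ∧ Module.finrank F U = j + 1 := by
        intro U; simp [hSdef]
      have h3 : ∀ U ∈ S, W ≤ U := fun U hU => ((hmemS U).1 hU).1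
      have h2 : ∀ P : Projectivization F (Fin k → F), ¬ P.submodule ≤ W →
          (S.filter (fun U => P.submodule ≤ U)).card = 1 := by
        intro P hP
        have hsupr : Module.finrank F ↥(W ⊔ P.submodule) = j + 1 := by
          rw [finrank_sup_point W P hP, hWj]
        have heq : S.filter (fun U => P.submodule ≤ U) = {W ⊔ P.submodule} := by
          ext U
          simp only [Finset.mem_filter, hmemS, Finset.mem_singleton]
          constructor
          · rintro ⟨⟨hWU, hrU⟩, hPU⟩
            exact (Submodule.eq_of_le_of_finrank_le (sup_le hWU hPU) (by omega)).symm
          · rintro rfl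
            exact ⟨⟨le_sup_left, hsupr⟩, le_sup_right⟩
        rw [heq, Finset.card_singleton]
      have h1 : ∀ U ∈ S, mPointsOn K U ≤ j + 1 := by
        intro U hU
        have := ih (by omega) U (by rw [((hmemS U).1 hU).2, hjk])
        omega
      have hne : S.Nonempty := by
        obtain ⟨U, hWU, hU⟩ := exists_flat_succ W (by rw [hWj, hV]; omega)
        exact ⟨U, (hmemS U).2 ⟨hWU, by rw [hU, hWj]⟩⟩
      have hineq := key_ineq K W S (j + 1) h3 h2 h1
      rw [hcard] at hineq
      set N := S.card with hNdef
      set m := mPointsOn K W with hmdef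
      have hN1 : 1 ≤ N := Finset.card_pos.mpr hne
      by_contra hcon
      push_neg at hcon
      have hm : j + 1 ≤ m := by omega
      have t3 : (N - 1) * (j + 1) ≤ (N - 1) * m := Nat.mul_le_mul_left _ hm
      have e1 : (N - 1) * m + m = N * m := by
        have h' : N - 1 + 1 = N := by omega
        calc (N - 1) * m + m = ((N - 1) + 1) * m := by ring
        _ = N * m := by rw [h']
      have e2 : (N - 1) * (j + 1) + (j + 1) = N * (j + 1) := by
        have h' : N - 1 + 1 = N := by omega
        calc (N - 1) * (j + 1) + (j + 1) = ((N - 1) + 1) * (j + 1) := by ring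
        _ = N * (j + 1) := by rw [h']
      omega
  rw [Multiset.nodup_iff_count_le_one]
  intro a
  have h1 : Module.finrank F (a.submodule) = 1 := a.finrank_submodule
  have hlast : mPointsOn K a.submodule ≤ 1 := by
    have := descent (k - 3) le_rfl a.submodule (by rw [h1]; omega)
    omega
  calc Multiset.count a K = (K.filter (a = ·)).card :=
        Multiset.count_eq_card_filter_eq K a
  _ ≤ mPointsOn K a.submodule := by
      apply Multiset.card_le_card
      apply Multiset.monotone_filter_right
      intro Q hQ
      subst hQ
      exact le_rfl
  _ ≤ 1 := hlast


end
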